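/- There is no nonzero Heisenberg-invariant quadric in 7 variables: the only homogeneous polynomial q ∈ ℂ[x₀, …, x₆] of degree 2 that is invariant under both the cyclic substitution x_j ↦ x_{j+1} (indices modulo 7) and the diagonal substitution x_j ↦ ε^j x_j is q = 0. -/

import Mathlib

noncomputable section

open MvPolynomial

/-- `ε = exp(2πi/7)`. -/
noncomputable def ε : ℂ := Complex.exp (2 * Real.pi * Complex.I / 7)

/-- `ε` is a primitive 7th root of unity. -/
lemma eps_prim : IsPrimitiveRoot ε 7 := by
  have h := Complex.isPrimitiveRoot_exp 7 (by norm_num)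
  rw [show ((7:ℕ):ℂ) = (7:ℂ) by norm_num] at h
  exact h

/-- Coefficient of the image of a polynomial under the diagonal substitution
`x_j ↦ c_j • x_j`. -/
lemma coeff_aeval_smul (c : ZMod 7 → ℂ) (q : MvPolynomial (ZMod 7) ℂ) (d : ZMod 7 →₀ ℕ) :
    coeff d (aeval (fun j => c j • X j) q) = (d.prod fun j e => c j ^ e) * coeff d q := by
  induction q using MvPolynomial.induction_on' with
  | add p r hp hr => rw [map_add, coeff_add, hp, hr, coeff_add, mul_add]
  | monomial s a =>
    have key : (aeval (fun j => c j • (X j : MvPolynomial (ZMod 7) ℂ)))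
        (monomial s a) = C (s.prod fun j e => c j ^ e) * monomial s a := by
      rw [aeval_monomial, monomial_eq]
      simp only [MvPolynomial.smul_eq_C_mul, mul_pow, ← map_pow]
      rw [Finsupp.prod, Finsupp.prod, Finsupp.prod, Finset.prod_mul_distrib, map_prod]
      rw [algebraMap_eq]
      ring
    rw [key, coeff_C_mul, coeff_monomial]
    by_cases h : s = d
    · subst h; simp
    · simp [h]

/-- the only homogeneous polynomial of degree 2 in
ℂ[x₀,…,x₆] invariant under the cyclic substitution x_j ↦ x_{j+1} and the
diagonal substitution x_j ↦ ε^j x_j is 0. -/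
theorem no_heisenberg_invariant_quadric (q : MvPolynomial (ZMod 7) ℂ)
    (hq : q.IsHomogeneous 2)
    (hcyc : MvPolynomial.rename (fun j : ZMod 7 => j + 1) q = q)
    (hdiag : MvPolynomial.aeval
        (fun j : ZMod 7 => (ε ^ j.val) • (MvPolynomial.X j : MvPolynomial (ZMod 7) ℂ)) q = q) :
    q = 0 := by
  have hprim := eps_prim
  ext d
  rw [coeff_zero]
  by_contra hne
  -- the weight of any monomial in the support is divisible by 7
  have key : ∀ d' : ZMod 7 →₀ ℕ, coeff d' q ≠ 0 →
      ((∑ j ∈ d'.support, (j : ZMod 7) * (d' j : ZMod 7)) = 0) := by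
    intro d' h
    have h1 := coeff_aeval_smul (fun j => ε ^ j.val) q d'
    rw [hdiag] at h1
    have hpow : (d'.prod fun j e => (ε ^ j.val) ^ e)
        = ε ^ (∑ j ∈ d'.support, j.val * d' j) := by
      rw [Finsupp.prod]
      simp only [← pow_mul]
      rw [Finset.prod_pow_eq_pow_sum]
    have h2 : (d'.prod fun j e => (ε ^ j.val) ^ e) = 1 := by
      have hmc : (d'.prod fun j e => (ε ^ j.val) ^ e) * coeff d' q
          = 1 * coeff d' q := by rw [one_mul, ← h1]
      exact mul_right_cancel₀ h hmc
    rw [hpow, hprim.pow_eq_one_iff_dvd] at h2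
    have h3 : ((∑ j ∈ d'.support, j.val * d' j : ℕ) : ZMod 7) = 0 :=
      (ZMod.natCast_eq_zero_iff _ _).mpr h2
    push_cast at h3
    simpa [ZMod.natCast_val, ZMod.cast_id] using h3
  -- the degree of d is 2
  have hdeg : ∑ j ∈ d.support, d j = 2 := by
    have := hq hne
    simpa [Finsupp.weight_apply, Finsupp.sum, smul_eq_mul] using this
  -- the shifted monomial has the same (nonzero) coefficient
  have hinj : Function.Injective (fun j : ZMod 7 => j + 1) := fun a b h => by
    simpa using h
  have hcoeff2 : coeff (Finsupp.mapDomain (fun j : ZMod 7 => j + 1) d) q = coeff d q := by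
    conv_lhs => rw [← hcyc]
    exact coeff_rename_mapDomain _ hinj q d
  have h1 := key d hne
  have h2 := key _ (hcoeff2 ▸ hne)
  -- compute the weight of the shifted monomial
  have hsum : (∑ j ∈ (Finsupp.mapDomain (fun j : ZMod 7 => j + 1) d).support,
      (j : ZMod 7) * ((Finsupp.mapDomain (fun j : ZMod 7 => j + 1) d) j : ZMod 7))
      = ∑ j ∈ d.support, ((j : ZMod 7) + 1) * (d j : ZMod 7) := by
    have := Finsupp.sum_mapDomain_index (f := fun j : ZMod 7 => j + 1)
      (s := d) (h := fun j e => (j : ZMod 7) * (e : ZMod 7))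
      (by intro a; simp) (by intro a b c; push_cast; ring)
    simpa [Finsupp.sum] using this
  rw [hsum] at h2
  have h4 : ∑ j ∈ d.support, ((j : ZMod 7) + 1) * (d j : ZMod 7)
      = (∑ j ∈ d.support, (j : ZMod 7) * (d j : ZMod 7))
        + ∑ j ∈ d.support, (d j : ZMod 7) := by
    rw [← Finset.sum_add_distrib]; congr 1; ext j; ring
  have h5 : (∑ j ∈ d.support, (d j : ZMod 7)) = 2 := by
    have : ((∑ j ∈ d.support, d j : ℕ) : ZMod 7) = ((2 : ℕ) : ZMod 7) := by rw [hdeg]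
    push_cast at this
    simpa using this
  rw [h4, h1, h5, zero_add] at h2
  exact absurd h2 (by decide)

end
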